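/- Let A : ℝ → End(ℝⁿ) be a continuous family of diagonal matrices A(s) = diag(a₁(s),…,a_n(s)) with aᵢ(s) = aᵢ^± constant nonzero for ±s ≥ 1. Then the kernel of the operator D_A : W^{1,2}(ℝ,ℝⁿ) → L²(ℝ,ℝⁿ), ξ ↦ ∂ₛξ + Aξ, has dimension max{μ(A⁻) - μ(A⁺), 0}, where μ(A^±) is the number of negative entries among the aᵢ^± (with eigenvalues ordered increasingly). -/

import Mathlib

open MeasureTheory

/-- The kernel of the operator `D_A ξ = ∂ₛ ξ + A ξ` on `W^{1,2}(ℝ, ℝⁿ)`, for a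
diagonal family `A(s) = diag(a₁(s), …, a_n(s))`. -/
def kerDiag (n : ℕ) (a : ℝ → Fin n → ℝ) : Submodule ℝ (ℝ → Fin n → ℝ) where
  carrier := {ξ | MemLp ξ 2 (volume : Measure ℝ) ∧
    ∀ s : ℝ, HasDerivAt ξ (fun i => -(a s i * ξ s i)) s}
  zero_mem' := by
    refine ⟨MemLp.zero, fun s => ?_⟩
    have h : HasDerivAt (fun _ : ℝ => (0 : Fin n → ℝ)) 0 s := hasDerivAt_const s 0
    convert h using 1
    all_goals try rfl
    funext i
    simp
  add_mem' := by
    rintro ξ η ⟨hξm, hξd⟩ ⟨hηm, hηd⟩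
    refine ⟨hξm.add hηm, fun s => ?_⟩
    have h := (hξd s).add (hηd s)
    convert h using 1
    all_goals try rfl
    funext i
    simp [Pi.add_apply]
    ring
  smul_mem' := by
    rintro c ξ ⟨hm, hd⟩
    refine ⟨hm.const_smul c, fun s => ?_⟩
    have h := (hd s).const_smul c
    convert h using 1
    all_goals try rfl
    funext i
    simp [Pi.smul_apply, smul_eq_mul]
    ring

open MeasureTheory Set intervalIntegral

namespace KerDiagAux

variable {n : ℕ} {a : ℝ → Fin n → ℝ}

lemma cont_comp (ha : Continuous a) (i : Fin n) : Continuous fun t => a t i :=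
  (continuous_apply i).comp ha

noncomputable def F (a : ℝ → Fin n → ℝ) (i : Fin n) (s : ℝ) : ℝ := ∫ t in (0:ℝ)..s, a t i

lemma hasDerivAt_F (ha : Continuous a) (i : Fin n) (s : ℝ) :
    HasDerivAt (F a i) (a s i) s :=
  ((cont_comp ha i).integral_hasStrictDerivAt 0 s).hasDerivAt

lemma continuous_F (ha : Continuous a) (i : Fin n) : Continuous (F a i) :=
  (Differentiable.continuous fun s => (hasDerivAt_F ha i s).differentiableAt)

lemma F_zero (i : Fin n) : F a i 0 = 0 := intervalIntegral.integral_same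

lemma uniq (ha : Continuous a) {ξ : ℝ → Fin n → ℝ}
    (hξ : ∀ s, HasDerivAt ξ (fun i => -(a s i * ξ s i)) s) (s : ℝ) (i : Fin n) :
    ξ s i = ξ 0 i * Real.exp (-(F a i s)) := by
  have hyd : ∀ t, HasDerivAt (fun u => ξ u i) (-(a t i * ξ t i)) t := fun t =>
    (hasDerivAt_pi.mp (hξ t)) i
  have hh : ∀ t, HasDerivAt (fun u => ξ u i * Real.exp (F a i u)) 0 t := by
    intro t
    have h := (hyd t).mul ((hasDerivAt_F ha i t).exp)
    convert h using 1
    all_goals try rfl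
    ring
  have hconst : ξ s i * Real.exp (F a i s) = ξ 0 i * Real.exp (F a i 0) :=
    is_const_of_deriv_eq_zero (fun t => (hh t).differentiableAt)
      (fun t => (hh t).deriv) s 0
  rw [F_zero, Real.exp_zero, mul_one] at hconst
  rw [Real.exp_neg, ← hconst]
  field_simp

lemma F_right (ha : Continuous a) {ap : Fin n → ℝ}
    (hplus : ∀ s : ℝ, 1 ≤ s → ∀ i, a s i = ap i) {s : ℝ} (hs : 1 ≤ s) (i : Fin n) :
    F a i s = F a i 1 + ap i * (s - 1) := by
  have h1 : F a i 1 + ∫ t in (1:ℝ)..s, a t i = F a i s :=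
    integral_add_adjacent_intervals ((cont_comp ha i).intervalIntegrable _ _)
      ((cont_comp ha i).intervalIntegrable _ _)
  have h2 : (∫ t in (1:ℝ)..s, a t i) = ap i * (s - 1) := by
    rw [integral_congr (g := fun _ => ap i) ?_, intervalIntegral.integral_const, smul_eq_mul,
      mul_comm]
    intro t ht
    rw [Set.uIcc_of_le hs] at ht
    exact hplus t ht.1 i
  rw [← h1, h2]

lemma F_left (ha : Continuous a) {am : Fin n → ℝ}
    (hminus : ∀ s : ℝ, s ≤ -1 → ∀ i, a s i = am i) {s : ℝ} (hs : s ≤ -1) (i : Fin n) :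
    F a i s = F a i (-1) + am i * (s + 1) := by
  have h1 : F a i (-1) + ∫ t in (-1:ℝ)..s, a t i = F a i s :=
    integral_add_adjacent_intervals ((cont_comp ha i).intervalIntegrable _ _)
      ((cont_comp ha i).intervalIntegrable _ _)
  have h2 : (∫ t in (-1:ℝ)..s, a t i) = am i * (s + 1) := by
    rw [integral_congr (g := fun _ => am i) ?_, intervalIntegral.integral_const, smul_eq_mul,
      mul_comm]
    · ring
    intro t ht
    rw [Set.uIcc_of_ge hs] at ht
    exact hminus t ht.2 i
  rw [← h1, h2]

lemma exp_integrableOn_Iic {b : ℝ} (hb : 0 < b) (c : ℝ) :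
    IntegrableOn (fun x => Real.exp (b * x)) (Iic c) := by
  rw [integrableOn_Iic_iff_integrableOn_Iio]
  have h := exp_neg_integrableOn_Ioi (-c) hb
  have h2 := (MeasurePreserving.integrableOn_comp_preimage
      (Measure.measurePreserving_neg (volume : Measure ℝ))
      (Homeomorph.neg ℝ).measurableEmbedding).2 h
  have hs : (fun x : ℝ => -x) ⁻¹' (Ioi (-c)) = Iio c := by
    ext x; simp
  rw [hs] at h2
  refine h2.congr_fun (fun x _ => ?_) measurableSet_Iio
  simp only [Function.comp, mul_neg, neg_neg, neg_mul]

set_option maxHeartbeats 1000000 in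
lemma g_sq_integrable (ha : Continuous a) {ap am : Fin n → ℝ}
    (hplus : ∀ s : ℝ, 1 ≤ s → ∀ i, a s i = ap i)
    (hminus : ∀ s : ℝ, s ≤ -1 → ∀ i, a s i = am i)
    {i : Fin n} (hp : 0 < ap i) (hm : am i < 0) :
    Integrable (fun s => Real.exp (-(F a i s)) ^ 2) := by
  have hcont : Continuous fun s => Real.exp (-(F a i s)) ^ 2 :=
    (Real.continuous_exp.comp (continuous_F ha i).neg).pow 2
  rw [← integrableOn_univ]
  have huniv : (univ : Set ℝ) = Iic (-1) ∪ (Icc (-1) 1 ∪ Ioi 1) := by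
    ext x
    simp only [mem_univ, mem_union, mem_Iic, mem_Icc, mem_Ioi, true_iff]
    by_cases h1 : x ≤ -1
    · exact Or.inl h1
    by_cases h2 : 1 < x
    · exact Or.inr (Or.inr h2)
    · exact Or.inr (Or.inl ⟨le_of_not_ge h1, le_of_not_gt h2⟩)
  rw [huniv]
  refine IntegrableOn.union ?_ (IntegrableOn.union ?_ ?_)
  · -- Iic (-1)
    have hmaj : IntegrableOn
        (fun s => Real.exp (-2 * F a i (-1) - 2 * am i) * Real.exp ((-2 * am i) * s))
        (Iic (-1)) :=
      (exp_integrableOn_Iic (by linarith) (-1)).const_mul _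
    refine hmaj.congr_fun (fun s hs => ?_) measurableSet_Iic
    dsimp only
    rw [F_left ha hminus hs i, sq, ← Real.exp_add, ← Real.exp_add]
    congr 1
    ring
  · exact hcont.integrableOn_Icc
  · -- Ioi 1
    have hmaj : IntegrableOn
        (fun s => Real.exp (-2 * F a i 1 + 2 * ap i) * Real.exp (-(2 * ap i) * s))
        (Ioi 1) := by
      have h := exp_neg_integrableOn_Ioi (b := 2 * ap i) 1 (by linarith)
      exact h.const_mul _
    refine hmaj.congr_fun (fun s hs => ?_) measurableSet_Ioi
    dsimp only
    rw [F_right ha hplus (le_of_lt (mem_Ioi.mp hs)) i, sq, ← Real.exp_add, ← Real.exp_add]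
    congr 1
    ring

lemma continuous_single (ha : Continuous a) (i : Fin n) :
    Continuous fun s => (Pi.single i (Real.exp (-(F a i s))) : Fin n → ℝ) := by
  refine continuous_pi fun j => ?_
  by_cases hj : j = i
  · subst hj
    simp only [Pi.single_eq_same]
    exact Real.continuous_exp.comp (continuous_F ha j).neg
  · simpa only [Pi.single_eq_of_ne hj] using continuous_const (y := (0:ℝ))

lemma memL2_single (ha : Continuous a) {ap am : Fin n → ℝ}
    (hplus : ∀ s : ℝ, 1 ≤ s → ∀ i, a s i = ap i)
    (hminus : ∀ s : ℝ, s ≤ -1 → ∀ i, a s i = am i)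
    {i : Fin n} (hp : 0 < ap i) (hm : am i < 0) :
    MemLp (fun s => (Pi.single i (Real.exp (-(F a i s))) : Fin n → ℝ)) 2
      (volume : Measure ℝ) := by
  rw [memLp_two_iff_integrable_sq_norm (continuous_single ha i).aestronglyMeasurable]
  have heq : (fun s => ‖(Pi.single i (Real.exp (-(F a i s))) : Fin n → ℝ)‖ ^ 2) =
      fun s => Real.exp (-(F a i s)) ^ 2 := by
    funext s
    rw [Pi.norm_single, Real.norm_eq_abs, sq_abs]
  rw [heq]
  exact g_sq_integrable ha hplus hminus hp hm

lemma deriv_single (ha : Continuous a) (i : Fin n) (s : ℝ) :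
    HasDerivAt (fun u => (Pi.single i (Real.exp (-(F a i u))) : Fin n → ℝ))
      (fun j => -(a s j * (Pi.single i (Real.exp (-(F a i s))) : Fin n → ℝ) j)) s := by
  refine hasDerivAt_pi.mpr fun j => ?_
  by_cases hj : j = i
  · subst hj
    simp only [Pi.single_eq_same]
    have hg : HasDerivAt (fun u => Real.exp (-(F a j u)))
        (Real.exp (-(F a j s)) * (-(a s j))) s := ((hasDerivAt_F ha j s).neg).exp
    convert hg using 1
    all_goals try rfl
    ring
  · have he : ∀ u, (Pi.single (M := fun _ : Fin n => ℝ) i (Real.exp (-(F a i u)))) j = 0 :=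
      fun u => Pi.single_eq_of_ne hj _
    simp only [he, mul_zero, neg_zero]
    exact hasDerivAt_const s 0

lemma vanish (ha : Continuous a) {ap am : Fin n → ℝ}
    (hplus : ∀ s : ℝ, 1 ≤ s → ∀ i, a s i = ap i)
    (hminus : ∀ s : ℝ, s ≤ -1 → ∀ i, a s i = am i)
    {ξ : ℝ → Fin n → ℝ} (hξm : MemLp ξ 2 (volume : Measure ℝ))
    (hξd : ∀ s, HasDerivAt ξ (fun i => -(a s i * ξ s i)) s)
    {i : Fin n} (hi : ap i < 0 ∨ 0 < am i) : ξ 0 i = 0 := by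
  by_contra hc
  have huniq := uniq ha hξd
  have hyc : Continuous fun s => ξ s i := by
    have : (fun s => ξ s i) = fun s => ξ 0 i * Real.exp (-(F a i s)) :=
      funext fun s => huniq s i
    rw [this]
    exact continuous_const.mul (Real.continuous_exp.comp (continuous_F ha i).neg)
  have hy2 : MemLp (fun s => ξ s i) 2 (volume : Measure ℝ) :=
    hξm.of_le hyc.aestronglyMeasurable
      (Filter.Eventually.of_forall fun s => norm_le_pi_norm (ξ s) i)
  have hint : Integrable (fun s => (ξ s i) ^ 2) :=
    (memLp_two_iff_integrable_sq hyc.aestronglyMeasurable).mp hy2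
  rcases hi with hi | hi
  · -- ap i < 0 : not integrable on Ici 1
    set K := (ξ 0 i) ^ 2 * Real.exp (-(F a i 1)) ^ 2 with hK
    have hKpos : 0 < K := by
      rw [hK, ← sq_abs (ξ 0 i)]
      exact mul_pos (pow_pos (abs_pos.mpr hc) 2) (pow_pos (Real.exp_pos _) 2)
    have hKint : IntegrableOn (fun _ : ℝ => K) (Ici 1) := by
      refine Integrable.mono' hint.integrableOn aestronglyMeasurable_const ?_
      rw [ae_restrict_iff' measurableSet_Ici]
      refine Filter.Eventually.of_forall fun s hs => ?_
      rw [Real.norm_eq_abs, abs_of_nonneg hKpos.le, huniq s i, F_right ha hplus hs i, mul_pow, hK]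
      have h1 : Real.exp (-(F a i 1)) ≤ Real.exp (-(F a i 1 + ap i * (s - 1))) := by
        refine Real.exp_le_exp.mpr ?_
        nlinarith [mem_Ici.mp hs]
      exact mul_le_mul_of_nonneg_left
        (pow_le_pow_left₀ (Real.exp_pos _).le h1 2) (sq_nonneg _)
    rcases (integrableOn_const_iff (C := K)).mp hKint with h | h
    · exact hKpos.ne' (enorm_eq_zero.mp h)
    · rw [Real.volume_Ici] at h
      exact (lt_irrefl _ h).elim
  · -- 0 < am i : not integrable on Iic (-1)
    set K := (ξ 0 i) ^ 2 * Real.exp (-(F a i (-1))) ^ 2 with hK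
    have hKpos : 0 < K := by
      rw [hK, ← sq_abs (ξ 0 i)]
      exact mul_pos (pow_pos (abs_pos.mpr hc) 2) (pow_pos (Real.exp_pos _) 2)
    have hKint : IntegrableOn (fun _ : ℝ => K) (Iic (-1)) := by
      refine Integrable.mono' hint.integrableOn aestronglyMeasurable_const ?_
      rw [ae_restrict_iff' measurableSet_Iic]
      refine Filter.Eventually.of_forall fun s hs => ?_
      rw [Real.norm_eq_abs, abs_of_nonneg hKpos.le, huniq s i, F_left ha hminus hs i, mul_pow, hK]
      have h1 : Real.exp (-(F a i (-1))) ≤ Real.exp (-(F a i (-1) + am i * (s + 1))) := by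
        refine Real.exp_le_exp.mpr ?_
        nlinarith [mem_Iic.mp hs]
      exact mul_le_mul_of_nonneg_left
        (pow_le_pow_left₀ (Real.exp_pos _).le h1 2) (sq_nonneg _)
    rcases (integrableOn_const_iff (C := K)).mp hKint with h | h
    · exact hKpos.ne' (enorm_eq_zero.mp h)
    · rw [Real.volume_Iic] at h
      exact (lt_irrefl _ h).elim

lemma card_aux {ap am : Fin n → ℝ} (hapne : ∀ i, ap i ≠ 0)
    (hapmono : Monotone ap) (hammono : Monotone am) :
    (Finset.univ.filter fun i => 0 < ap i ∧ am i < 0).card =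
      (Finset.univ.filter fun i => am i < 0).card -
        (Finset.univ.filter fun i => ap i < 0).card := by
  classical
  have hS : (Finset.univ.filter fun i => 0 < ap i ∧ am i < 0) =
      (Finset.univ.filter fun i => am i < 0) \ (Finset.univ.filter fun i => ap i < 0) := by
    ext i
    simp only [Finset.mem_filter, Finset.mem_univ, true_and, Finset.mem_sdiff, not_lt]
    constructor
    · rintro ⟨h1, h2⟩
      exact ⟨h2, h1.le⟩
    · rintro ⟨h2, h1⟩
      exact ⟨lt_of_le_of_ne h1 (Ne.symm (hapne i)), h2⟩
  rw [hS]
  have hcomp : (Finset.univ.filter fun i => ap i < 0) ⊆ (Finset.univ.filter fun i => am i < 0) ∨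
      (Finset.univ.filter fun i => am i < 0) ⊆ (Finset.univ.filter fun i => ap i < 0) := by
    by_cases h : (Finset.univ.filter fun i => ap i < 0) ⊆ (Finset.univ.filter fun i => am i < 0)
    · exact Or.inl h
    · right
      obtain ⟨i, hiP, hiM⟩ := Finset.not_subset.mp h
      simp only [Finset.mem_filter, Finset.mem_univ, true_and, not_lt] at hiP hiM
      intro j hj
      simp only [Finset.mem_filter, Finset.mem_univ, true_and] at hj ⊢
      rcases le_total j i with hji | hij
      · exact lt_of_le_of_lt (hapmono hji) hiP
      · exact absurd hj (not_lt.mpr (le_trans hiM (hammono hij)))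
  rcases hcomp with h | h
  · exact Finset.card_sdiff_of_subset h
  · rw [Finset.sdiff_eq_empty_iff_subset.mpr h, Finset.card_empty,
      (Nat.sub_eq_zero_of_le (Finset.card_le_card h))]

end KerDiagAux

/-- If `A(s) = diag(a₁(s), …, a_n(s))` is continuous, constant equal to
nonzero values `aᵢ^±` for `±s ≥ 1`, with the asymptotic eigenvalues ordered
increasingly, then `dim ker D_A = max{μ(A⁻) - μ(A⁺), 0}` where `μ(A^±)` is the
number of negative entries among the `aᵢ^±` (`ℕ`-subtraction is truncated). -/
theorem kernel_dimension_diagonal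
    (n : ℕ) (a : ℝ → Fin n → ℝ) (ha : Continuous a)
    (ap am : Fin n → ℝ)
    (hplus : ∀ s : ℝ, 1 ≤ s → ∀ i, a s i = ap i)
    (hminus : ∀ s : ℝ, s ≤ -1 → ∀ i, a s i = am i)
    (hapne : ∀ i, ap i ≠ 0) (hamne : ∀ i, am i ≠ 0)
    (hapmono : Monotone ap) (hammono : Monotone am) :
    Module.finrank ℝ (kerDiag n a) =
      (Finset.univ.filter fun i => am i < 0).card -
        (Finset.univ.filter fun i => ap i < 0).card := by
  classical
  have hker : ∀ ξ : ℝ → Fin n → ℝ, ξ ∈ kerDiag n a ↔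
      MemLp ξ 2 (volume : Measure ℝ) ∧
        ∀ s, HasDerivAt ξ (fun i => -(a s i * ξ s i)) s := fun ξ => Iff.rfl
  set S : Finset (Fin n) := Finset.univ.filter (fun i => 0 < ap i ∧ am i < 0) with hSdef
  let E : kerDiag n a →ₗ[ℝ] (Fin n → ℝ) :=
    { toFun := fun ξ => (ξ : ℝ → Fin n → ℝ) 0
      map_add' := fun ξ η => rfl
      map_smul' := fun c ξ => rfl }
  have hEapply : ∀ ξ : kerDiag n a, E ξ = (ξ : ℝ → Fin n → ℝ) 0 := fun _ => rfl
  have hinj : Function.Injective E := by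
    intro ξ η h
    apply Subtype.ext
    funext s
    funext i
    rw [KerDiagAux.uniq ha ((hker _).mp ξ.2).2 s i, KerDiagAux.uniq ha ((hker _).mp η.2).2 s i,
      show (ξ : ℝ → Fin n → ℝ) 0 i = (η : ℝ → Fin n → ℝ) 0 i from congrFun h i]
  have hrange : LinearMap.range E =
      Submodule.span ℝ (Set.range fun i : {i : Fin n // i ∈ S} =>
        (Pi.single (i : Fin n) 1 : Fin n → ℝ)) := by
    apply le_antisymm
    · rintro v ⟨ξ, rfl⟩
      obtain ⟨hm, hd⟩ := (hker _).mp ξ.2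
      have hvz : ∀ i, i ∉ S → (ξ : ℝ → Fin n → ℝ) 0 i = 0 := by
        intro i hi
        simp only [hSdef, Finset.mem_filter, Finset.mem_univ, true_and, not_and, not_lt] at hi
        refine KerDiagAux.vanish ha hplus hminus hm hd ?_
        rcases (hapne i).lt_or_gt with h | h
        · exact Or.inl h
        · rcases (hamne i).lt_or_gt with h' | h'
          · exact absurd h' (not_lt.mpr (hi h))
          · exact Or.inr h'
      have hv : E ξ = ∑ i ∈ S, (ξ : ℝ → Fin n → ℝ) 0 i • (Pi.single i 1 : Fin n → ℝ) := by
        rw [hEapply]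
        funext j
        rw [Finset.sum_apply]
        simp only [Pi.smul_apply, Pi.single_apply, smul_eq_mul, mul_ite, mul_one, mul_zero]
        rw [Finset.sum_ite_eq]
        by_cases hj : j ∈ S
        · simp [hj]
        · simp [hj, hvz j hj]
      rw [hv]
      exact Submodule.sum_mem _ fun i hi =>
        Submodule.smul_mem _ _ (Submodule.subset_span ⟨⟨i, hi⟩, rfl⟩)
    · rw [Submodule.span_le]
      rintro v ⟨i, rfl⟩
      obtain ⟨hp, hm⟩ : 0 < ap (i : Fin n) ∧ am (i : Fin n) < 0 := by
        have h := i.2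
        simp only [hSdef, Finset.mem_filter, Finset.mem_univ, true_and] at h
        exact h
      refine ⟨⟨fun s =>
        (Pi.single (i : Fin n) (Real.exp (-(KerDiagAux.F a (i : Fin n) s))) : Fin n → ℝ),
        (hker _).mpr ⟨KerDiagAux.memL2_single ha hplus hminus hp hm,
          fun s => KerDiagAux.deriv_single ha (i : Fin n) s⟩⟩, ?_⟩
      rw [hEapply]
      funext j
      simp [KerDiagAux.F_zero]
  have hli : LinearIndependent ℝ
      (fun i : {i : Fin n // i ∈ S} => (Pi.single (i : Fin n) 1 : Fin n → ℝ)) := by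
    have h := (Pi.basisFun ℝ (Fin n)).linearIndependent
    have h2 := h.comp (Subtype.val : {i : Fin n // i ∈ S} → Fin n) Subtype.val_injective
    have he : (fun i : {i : Fin n // i ∈ S} => (Pi.single (i : Fin n) 1 : Fin n → ℝ)) =
        (⇑(Pi.basisFun ℝ (Fin n)) ∘ Subtype.val) := by
      funext i
      simp [Pi.basisFun_apply]
    rw [he]
    exact h2
  have h1 : Module.finrank ℝ (kerDiag n a) = Module.finrank ℝ (LinearMap.range E) :=
    (LinearEquiv.ofInjective E hinj).finrank_eq
  rw [h1, hrange, finrank_span_eq_card hli, Fintype.card_coe, hSdef]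
  exact KerDiagAux.card_aux hapne hapmono hammono
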